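/- In the quantum beam splitter scenario with R = 1/2 and polarization input cos α|H⟩ + sin α|V⟩, the squared visibility and squared polarization-enhanced distinguishability satisfy 𝒱² + (𝒟_i^P)² = 1 exactly, where 𝒱 = sin²α and 𝒟_i^P = √(1 − sin⁴α). -/

import Mathlib

open ComplexOrder Matrix

/-- Trace norm ‖A‖₁ = Tr √(AᴴA). -/
noncomputable def traceNorm {n : Type*} [Fintype n] [DecidableEq n]
    (A : Matrix n n ℂ) : ℝ :=
  (((Matrix.posSemidef_conjTranspose_mul_self A).1.eigenvectorUnitary.1 *
      Matrix.diagonal (((↑) : ℝ → ℂ) ∘ (Real.sqrt ·) ∘ (Matrix.posSemidef_conjTranspose_mul_self A).1.eigenvalues) *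
      (star (Matrix.posSemidef_conjTranspose_mul_self A).1.eigenvectorUnitary : Matrix n n ℂ)).trace).re

lemma psd_real_smul {n : Type*} [Fintype n] {A : Matrix n n ℂ}
    (hA : A.PosSemidef) {c : ℝ} (hc : 0 ≤ c) : ((c : ℂ) • A).PosSemidef := by
  constructor
  · unfold Matrix.IsHermitian
    rw [Matrix.conjTranspose_smul, hA.1]
    congr 1
    simp
  · intro x
    exact (hA.smul (Complex.zero_le_real.mpr hc)).2 x

lemma traceNorm_special (a b : ℝ) :
    traceNorm !![(a : ℂ), b; b, 0] = Real.sqrt (a ^ 2 + 4 * b ^ 2) := by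
  set A : Matrix (Fin 2) (Fin 2) ℂ := !![(a : ℂ), b; b, 0] with hA
  have hM : Aᴴ * A = !![((a : ℂ)^2 + (b : ℂ)^2), (a : ℂ) * b;
      (a : ℂ) * b, (b : ℂ)^2] := by
    ext i j
    fin_cases i <;> fin_cases j <;>
      simp [hA, Matrix.mul_apply, Fin.sum_univ_two, Matrix.conjTranspose_apply] <;> ring
  have H := Matrix.posSemidef_conjTranspose_mul_self A
  have htn : traceNorm A = ∑ i, Real.sqrt (H.1.eigenvalues i) := by
    rw [traceNorm, Matrix.trace_mul_cycle]
    simp [Matrix.trace_diagonal]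
  have e00 : (Aᴴ * A) 0 0 = (a : ℂ)^2 + (b : ℂ)^2 := by rw [hM]; simp
  have e01 : (Aᴴ * A) 0 1 = (a : ℂ) * b := by rw [hM]; simp
  have e10 : (Aᴴ * A) 1 0 = (a : ℂ) * b := by rw [hM]; simp
  have e11 : (Aᴴ * A) 1 1 = (b : ℂ)^2 := by rw [hM]; simp
  have htr := H.1.trace_eq_sum_eigenvalues
  rw [Matrix.trace_fin_two, e00, e11, Fin.sum_univ_two] at htr
  have hdet := H.1.det_eq_prod_eigenvalues
  rw [Matrix.det_fin_two, e00, e01, e10, e11, Fin.prod_univ_two] at hdet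
  have h1 : H.1.eigenvalues 0 + H.1.eigenvalues 1 = a ^ 2 + b ^ 2 + b ^ 2 := by
    exact RCLike.ofReal_injective (K := ℂ) (by push_cast; exact htr.symm)
  have h2 : H.1.eigenvalues 0 * H.1.eigenvalues 1 = (a ^ 2 + b ^ 2) * b ^ 2 - (a * b) * (a * b) := by
    exact RCLike.ofReal_injective (K := ℂ) (by push_cast; exact hdet.symm)
  have he0 := H.eigenvalues_nonneg 0
  have he1 := H.eigenvalues_nonneg 1
  rw [htn, Fin.sum_univ_two]
  have hx2 := Real.sq_sqrt he0
  have hy2 := Real.sq_sqrt he1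
  have hx := Real.sqrt_nonneg (H.1.eigenvalues 0)
  have hy := Real.sqrt_nonneg (H.1.eigenvalues 1)
  have hxy : Real.sqrt (H.1.eigenvalues 0) * Real.sqrt (H.1.eigenvalues 1) = b ^ 2 := by
    have : (Real.sqrt (H.1.eigenvalues 0) * Real.sqrt (H.1.eigenvalues 1)) ^ 2 = (b ^ 2) ^ 2 := by
      rw [mul_pow, hx2, hy2, h2]; ring
    exact (pow_left_inj₀ (by positivity) (by positivity) two_ne_zero).mp this
  rw [← Real.sqrt_sq (add_nonneg hx hy)]
  congr 1
  linear_combination hx2 + hy2 + 2 * hxy + h1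

/-- Quantum beam splitter with R = 1/2: the WPDR 𝒱² + (𝒟ᵢᴾ)² = 1 holds exactly,
with 𝒱 = sin²α and 𝒟ᵢᴾ = ‖σ₀ − σ₁‖₁ = √(1 − sin⁴α). -/
theorem qbs_tight (α : ℝ) :
    traceNorm
        ((!![(Real.cos α ^ 2 : ℂ), Real.sin α * Real.cos α * Real.sqrt (1/2);
             Real.sin α * Real.cos α * Real.sqrt (1/2), Real.sin α ^ 2 * (1/2)])
          - !![0, 0; 0, (Real.sin α ^ 2 * (1/2) : ℂ)])
      = Real.sqrt (1 - Real.sin α ^ 4) ∧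
    (Real.sin α ^ 2) ^ 2 +
      (traceNorm
        ((!![(Real.cos α ^ 2 : ℂ), Real.sin α * Real.cos α * Real.sqrt (1/2);
             Real.sin α * Real.cos α * Real.sqrt (1/2), Real.sin α ^ 2 * (1/2)])
          - !![0, 0; 0, (Real.sin α ^ 2 * (1/2) : ℂ)])) ^ 2 = 1 := by
  have hmat : (!![(Real.cos α ^ 2 : ℂ), Real.sin α * Real.cos α * Real.sqrt (1/2);
             Real.sin α * Real.cos α * Real.sqrt (1/2), Real.sin α ^ 2 * (1/2)])
          - !![0, 0; 0, (Real.sin α ^ 2 * (1/2) : ℂ)]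
        = !![((Real.cos α ^ 2 : ℝ) : ℂ), ((Real.sin α * Real.cos α * Real.sqrt (1/2) : ℝ) : ℂ);
             ((Real.sin α * Real.cos α * Real.sqrt (1/2) : ℝ) : ℂ), 0] := by
    ext i j
    fin_cases i <;> fin_cases j <;> simp <;> push_cast <;> ring
  have hval : (Real.cos α ^ 2) ^ 2 + 4 * (Real.sin α * Real.cos α * Real.sqrt (1/2)) ^ 2
      = 1 - Real.sin α ^ 4 := by
    have hr : Real.sqrt (1/2) ^ 2 = 1/2 := Real.sq_sqrt (by norm_num)
    have hc : Real.cos α ^ 2 = 1 - Real.sin α ^ 2 := by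
      nlinarith [Real.sin_sq_add_cos_sq α]
    rw [mul_pow, mul_pow, hr, hc]; ring
  have htn : traceNorm
        ((!![(Real.cos α ^ 2 : ℂ), Real.sin α * Real.cos α * Real.sqrt (1/2);
             Real.sin α * Real.cos α * Real.sqrt (1/2), Real.sin α ^ 2 * (1/2)])
          - !![0, 0; 0, (Real.sin α ^ 2 * (1/2) : ℂ)])
      = Real.sqrt (1 - Real.sin α ^ 4) := by
    rw [hmat, traceNorm_special, hval]
  refine ⟨htn, ?_⟩
  rw [htn, Real.sq_sqrt (by nlinarith [Real.sin_sq_le_one α, sq_nonneg (Real.sin α ^ 2)])]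
  ring
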